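/- Let $F : X \rightrightarrows Y$ be a closed convex set-valued mapping between Banach spaces, $A \subseteq X$ closed convex, $\bar y \in Y$, $S := F^{-1}(\bar y) \cap A$, $\bar x \in S$. Suppose there exist $\eta > 0$ and $\delta > 0$ such that for all $x \in S \cap B(\bar x,\delta)$ and all $\eta_1,\eta_2 \geq 0$ with $\eta_1 + \eta_2 < \eta$: $DF^{-1}(\bar y,x)(\eta_1 B_Y) \cap (T(A,x) + \eta_2 B_X) \subseteq T(S,x) + B_X$. Then for every $\tau > 1/\eta$: $d(x,S) \leq \tau(d(\bar y, F(x)) + d(x,A))$ for all $x \in B(\bar x, \delta/2)$. -/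

import Mathlib

open Set Metric Filter Topology Pointwise

noncomputable section

/-- Contingent cone of a convex set: closure of ⋃_{t>0} (A - a)/t. -/
def contCone {X : Type*} [NormedAddCommGroup X] [NormedSpace ℝ X] (A : Set X) (a : X) : Set X :=
  closure {v : X | ∃ t : ℝ, 0 < t ∧ a + t • v ∈ A}

/-- Ekeland variational principle for the distance function on a closed set. -/
lemma ekeland_dist {X : Type*} [MetricSpace X] [CompleteSpace X]
    {S : Set X} (hScl : IsClosed S) (x x₀ : X) (hx₀ : x₀ ∈ S)
    {ε : ℝ} (hε : 0 < ε) :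
    ∃ z ∈ S, dist x z ≤ dist x x₀ ∧ ∀ w ∈ S, dist x z ≤ dist x w + ε * dist w z := by
  classical
  set M : X → Set X := fun z => {w ∈ S | dist x w + ε * dist w z ≤ dist x z} with hM
  have hMself : ∀ z ∈ S, z ∈ M z := by
    intro z hz; simp [hM, hz]
  have hMsub : ∀ z, M z ⊆ S := fun z w hw => hw.1
  have hMtrans : ∀ z z', z' ∈ M z → M z' ⊆ M z := by
    intro z z' hz' w hw
    refine ⟨hw.1, ?_⟩
    have h1 := hw.2
    have h2 := hz'.2
    have htri : dist w z ≤ dist w z' + dist z' z := dist_triangle _ _ _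
    nlinarith only [h1, h2, mul_le_mul_of_nonneg_left htri hε.le]
  have hstep : ∀ (n : ℕ) (z : X), z ∈ S →
      ∃ w ∈ M z, dist x w < infDist x (M z) + (1/2)^n := by
    intro n z hz
    exact (infDist_lt_iff ⟨z, hMself z hz⟩).mp
      (lt_add_of_pos_right _ (by positivity))
  -- recursive sequence
  let T := {z : X // z ∈ S}
  let next : ℕ → T → T := fun n z =>
    ⟨(hstep n z.1 z.2).choose, hMsub _ (hstep n z.1 z.2).choose_spec.1⟩
  let u : ℕ → T := fun n => Nat.rec ⟨x₀, hx₀⟩ next n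
  let z : ℕ → X := fun n => (u n).1
  have hzS : ∀ n, z n ∈ S := fun n => (u n).2
  have hz0 : z 0 = x₀ := rfl
  have hsucc : ∀ n, z (n+1) ∈ M (z n) ∧
      dist x (z (n+1)) < infDist x (M (z n)) + (1/2)^n := by
    intro n
    exact ⟨(hstep n (z n) (hzS n)).choose_spec.1,
      (hstep n (z n) (hzS n)).choose_spec.2⟩
  have hchain : ∀ n m, n ≤ m → z m ∈ M (z n) := by
    intro n m hnm
    induction m, hnm using Nat.le_induction with
    | base => exact hMself _ (hzS n)
    | succ m hnm ih => exact hMtrans _ _ ih (hsucc m).1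
  have hballs : ∀ n m, n + 1 ≤ m → dist (z m) (z (n+1)) ≤ (1/2)^n / ε := by
    intro n m hnm
    have h1 : z m ∈ M (z (n+1)) := hchain _ _ hnm
    have h2 : z m ∈ M (z n) := hchain _ _ (le_trans (Nat.le_succ n) hnm)
    have h3 : infDist x (M (z n)) ≤ dist x (z m) := infDist_le_dist_of_mem h2
    have h4 := (hsucc n).2
    have h5 := h1.2
    rw [le_div_iff₀ hε]
    nlinarith only [h3, h4, h5]
  have hcauchy : CauchySeq z := by
    rw [Metric.cauchySeq_iff']
    intro ε' hε'
    obtain ⟨N, hN⟩ := exists_pow_lt_of_lt_one (mul_pos hε hε') (by norm_num : (1:ℝ)/2 < 1)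
    refine ⟨N + 1, fun n hn => ?_⟩
    have := hballs N n hn
    have h2 : (1/2:ℝ)^N / ε < ε' := by
      rw [div_lt_iff₀ hε]; linarith [hN]
    linarith
  obtain ⟨zl, hzl⟩ := cauchySeq_tendsto_of_complete hcauchy
  have hzlS : zl ∈ S := hScl.mem_of_tendsto hzl (Eventually.of_forall hzS)
  have hMclosed : ∀ n, IsClosed (M (z n)) := by
    intro n
    have : Continuous (fun w => dist x w + ε * dist w (z n)) := by fun_prop
    exact hScl.inter (isClosed_le this continuous_const)
  have hzlM : ∀ n, zl ∈ M (z n) := by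
    intro n
    refine (hMclosed n).mem_of_tendsto hzl ?_
    filter_upwards [eventually_ge_atTop n] with m hm
    exact hchain n m hm
  have hbound : dist x zl ≤ dist x x₀ := by
    have := (hzlM 0).2
    rw [hz0] at this
    nlinarith only [this, mul_nonneg hε.le (dist_nonneg (x := zl) (y := x₀))]
  refine ⟨zl, hzlS, hbound, ?_⟩
  intro w hw
  by_contra hcon
  push_neg at hcon
  have hwM : ∀ n, w ∈ M (z n) := by
    intro n
    refine ⟨hw, ?_⟩
    have h1 := (hzlM n).2
    have htri : dist w (z n) ≤ dist w zl + dist zl (z n) := dist_triangle _ _ _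
    nlinarith only [h1, hcon.le, mul_le_mul_of_nonneg_left htri hε.le]
  have hwz : ∀ n, dist w (z (n+1)) ≤ (1/2)^n / ε := by
    intro n
    have h2 : infDist x (M (z n)) ≤ dist x w := infDist_le_dist_of_mem (hwM n)
    have h4 := (hsucc n).2
    have h5 := (hwM (n+1)).2
    rw [le_div_iff₀ hε]
    nlinarith only [h2, h4, h5]
  have hlim : Tendsto (fun n => z (n+1)) atTop (nhds w) := by
    rw [tendsto_iff_dist_tendsto_zero]
    have hle : ∀ n, dist (z (n+1)) w ≤ (1/2)^n/ε := by
      intro n; rw [dist_comm]; exact hwz n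
    have h0 : Tendsto (fun n : ℕ => (1/2:ℝ)^n) atTop (nhds 0) :=
      tendsto_pow_atTop_nhds_zero_of_lt_one (by norm_num) (by norm_num)
    exact squeeze_zero (fun n => dist_nonneg) hle (by simpa using h0.div_const ε)
  have hlim2 : Tendsto (fun n => z (n+1)) atTop (nhds zl) :=
    hzl.comp (tendsto_add_atTop_nat 1)
  have : w = zl := tendsto_nhds_unique hlim hlim2
  subst this
  simp at hcon

/-- The contingent cone is stable under positive scalar multiplication. -/
lemma contCone_smul {X : Type*} [NormedAddCommGroup X] [NormedSpace ℝ X]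
    {A : Set X} {a : X} {c : X} {r : ℝ} (hr : 0 < r) (hc : c ∈ contCone A a) :
    r • c ∈ contCone A a := by
  have hmap : (fun v : X => r • v) '' {v : X | ∃ t : ℝ, 0 < t ∧ a + t • v ∈ A} ⊆
      {v : X | ∃ t : ℝ, 0 < t ∧ a + t • v ∈ A} := by
    rintro _ ⟨v, ⟨t, ht, hA⟩, rfl⟩
    refine ⟨t/r, div_pos ht hr, ?_⟩
    rw [smul_smul, div_mul_cancel₀ _ hr.ne']
    exact hA
  have h1 := mem_closure_image (Continuous.continuousAt (continuous_const_smul r)) hc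
  exact closure_mono hmap h1

set_option maxHeartbeats 2000000 in
theorem stmt11 {X Y : Type*} [NormedAddCommGroup X] [NormedSpace ℝ X] [CompleteSpace X]
    [NormedAddCommGroup Y] [NormedSpace ℝ Y] [CompleteSpace Y]
    (F : X → Set Y) (hFcl : IsClosed {p : X × Y | p.2 ∈ F p.1})
    (hFcv : Convex ℝ {p : X × Y | p.2 ∈ F p.1})
    (A : Set X) (hAcl : IsClosed A) (hAcv : Convex ℝ A)
    (ybar : Y) (xbar : X) (hxbar : xbar ∈ {x : X | ybar ∈ F x} ∩ A)
    (η δ : ℝ) (hη : 0 < η) (hδ : 0 < δ)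
    (hincl : ∀ x ∈ ({x : X | ybar ∈ F x} ∩ A) ∩ ball xbar δ,
      ∀ η₁ η₂ : ℝ, 0 ≤ η₁ → 0 ≤ η₂ → η₁ + η₂ < η →
        {u : X | ∃ v ∈ closedBall (0 : Y) η₁,
            (u, v) ∈ contCone {p : X × Y | p.2 ∈ F p.1} (x, ybar)} ∩
          (contCone A x + closedBall (0 : X) η₂) ⊆
        contCone ({x : X | ybar ∈ F x} ∩ A) x + closedBall (0 : X) 1) :
    ∀ τ : ℝ, 1 / η < τ →
      ∀ x ∈ ball xbar (δ / 2),
        EMetric.infEdist x ({x : X | ybar ∈ F x} ∩ A) ≤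
          ENNReal.ofReal τ * (EMetric.infEdist ybar (F x) + EMetric.infEdist x A) := by
  classical
  intro τ hτ x hx
  set S : Set X := {x : X | ybar ∈ F x} ∩ A with hSdef
  have hτ0 : 0 < τ := lt_trans (by positivity) hτ
  have hSclF : IsClosed {x : X | ybar ∈ F x} := by
    have heq : {x : X | ybar ∈ F x} = (fun x => (x, ybar)) ⁻¹' {p : X × Y | p.2 ∈ F p.1} := rfl
    rw [heq]
    exact hFcl.preimage (by fun_prop)
  have hScl : IsClosed S := hSclF.inter hAcl
  have hSne : S.Nonempty := ⟨xbar, hxbar⟩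
  have hAne : A.Nonempty := ⟨xbar, hxbar.2⟩
  have hScv : Convex ℝ S := by
    refine Convex.inter ?_ hAcv
    intro x1 h1 x2 h2 a b ha hb hab
    have hcc := hFcv (show ((x1, ybar) : X × Y) ∈ _ from h1)
      (show ((x2, ybar) : X × Y) ∈ _ from h2) ha hb hab
    have heq : a • ((x1, ybar) : X × Y) + b • ((x2, ybar) : X × Y)
        = (a • x1 + b • x2, ybar) := by
      rw [Prod.smul_mk, Prod.smul_mk, Prod.mk_add_mk, Convex.combo_self hab]
    rwa [heq] at hcc
  rcases eq_or_ne (EMetric.infEdist ybar (F x)) ⊤ with htop | htop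
  · have h0 : ENNReal.ofReal τ ≠ 0 := by
      simp only [ne_eq, ENNReal.ofReal_eq_zero, not_le]
      exact hτ0
    have heqtop : ENNReal.ofReal τ * (⊤ + EMetric.infEdist x A) = ⊤ := by
      simp [ENNReal.mul_top h0]
    rw [htop, heqtop]
    exact le_top
  have hFxne : (F x).Nonempty := by
    by_contra h
    rw [not_nonempty_iff_eq_empty] at h
    exact htop (by rw [h]; exact EMetric.infEdist_empty)
  set dF := infDist ybar (F x) with hdFdef
  set dA := infDist x A with hdAdef
  suffices hreal : infDist x S ≤ τ * (dF + dA) by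
    have e1 : EMetric.infEdist x S = ENNReal.ofReal (infDist x S) := by
      rw [Metric.infDist, ENNReal.ofReal_toReal (Metric.infEdist_ne_top hSne)]
      rfl
    have e2 : EMetric.infEdist ybar (F x) = ENNReal.ofReal dF := by
      rw [hdFdef, Metric.infDist, ENNReal.ofReal_toReal]
      exacts [rfl, htop]
    have e3 : EMetric.infEdist x A = ENNReal.ofReal dA := by
      rw [hdAdef, Metric.infDist, ENNReal.ofReal_toReal (Metric.infEdist_ne_top hAne)]
      rfl
    rw [e1, e2, e3, ← ENNReal.ofReal_add infDist_nonneg infDist_nonneg,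
      ← ENNReal.ofReal_mul hτ0.le]
    exact ENNReal.ofReal_le_ofReal hreal
  by_contra hcon
  push_neg at hcon
  set D := infDist x S with hDdef
  have hdF : 0 ≤ dF := infDist_nonneg
  have hdA : 0 ≤ dA := infDist_nonneg
  have hD0 : 0 ≤ D := infDist_nonneg
  have hFxcl : IsClosed (F x) := by
    have heq : F x = (fun y => (x, y)) ⁻¹' {p : X × Y | p.2 ∈ F p.1} := rfl
    rw [heq]
    exact hFcl.preimage (by fun_prop)
  have hφpos : 0 < dF + dA := by
    rcases lt_or_eq_of_le (by positivity : (0:ℝ) ≤ dF + dA) with h | h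
    · exact h
    have hdF0 : dF = 0 := by linarith only [h, hdF, hdA]
    have hdA0 : dA = 0 := by linarith only [h, hdF, hdA]
    have hyF : ybar ∈ F x := by
      rw [← hFxcl.closure_eq]
      exact (mem_closure_iff_infDist_zero hFxne).mpr hdF0
    have hxA : x ∈ A := by
      rw [← hAcl.closure_eq]
      exact (mem_closure_iff_infDist_zero hAne).mpr hdA0
    have hD0' : D = 0 := infDist_zero_of_mem ⟨hyF, hxA⟩
    have hz0' : τ * (dF + dA) = 0 := by rw [hdF0, hdA0]; ring
    linarith only [hcon, hD0', hz0']
  have hDpos : 0 < D := lt_of_le_of_lt (by positivity) hcon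
  have hxS : x ∉ S := fun h => hDpos.ne' (infDist_zero_of_mem h)
  set m := dist x xbar with hmdef
  have hm : m < δ/2 := mem_ball.mp hx
  have hmpos : 0 < m := dist_pos.mpr (fun h => hxS (h ▸ hxbar))
  have hDm : D ≤ m := infDist_le_dist_of_mem hxbar
  have hk : 1 < τ * η := by
    rw [div_lt_iff₀ hη] at hτ
    linarith
  set ε := min (min (1/4) ((τ*η - 1)/(4*(τ*η)))) ((δ - 2*m)/(2*(m+1))) with hεdef
  have hτη : 0 < τ * η := by positivity
  have hεpos : 0 < ε := by
    refine lt_min (lt_min (by norm_num) ?_) ?_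
    · exact div_pos (by linarith) (by positivity)
    · exact div_pos (by linarith) (by linarith)
  have hε4 : ε ≤ 1/4 := le_trans (min_le_left _ _) (min_le_left _ _)
  have hε2 : ε ≤ (τ*η - 1)/(4*(τ*η)) := le_trans (min_le_left _ _) (min_le_right _ _)
  have hε3 : ε ≤ (δ - 2*m)/(2*(m+1)) := min_le_right _ _
  clear_value ε
  have hiii : (1+ε)^2 ≤ τ*η*(1-ε) := by
    have h1 : ε * (4*(τ*η)) ≤ τ*η - 1 := by
      rw [← le_div_iff₀ (by positivity)]
      exact hε2
    have e2 : ε*ε ≤ ε*(1/4) := mul_le_mul_of_nonneg_left hε4 hεpos.le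
    have e4 : ε*1 ≤ ε*(τ*η) := mul_le_mul_of_nonneg_left hk.le hεpos.le
    nlinarith only [h1, e2, e4]
  have hball2 : (2+ε)*m < δ := by
    have h1 : ε * (2*(m+1)) ≤ δ - 2*m := by
      rw [← le_div_iff₀ (by positivity)]
      exact hε3
    nlinarith only [h1, mul_pos hεpos hmpos, hεpos]
  obtain ⟨x₀, hx₀S, hx₀d⟩ := (infDist_lt_iff hSne).mp
    (show D < (1+ε)*D by nlinarith only [mul_pos hεpos hDpos])
  obtain ⟨z, hzS, hzd, hEk⟩ := ekeland_dist hScl x x₀ hx₀S hεpos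
  have hzD : dist x z ≤ (1+ε)*D := le_trans hzd hx₀d.le
  have hDz : D ≤ dist x z := infDist_le_dist_of_mem hzS
  have hzball : z ∈ ball xbar δ := by
    rw [mem_ball]
    have htri : dist z xbar ≤ dist z x + dist x xbar := dist_triangle _ _ _
    rw [dist_comm z x] at htri
    nlinarith only [htri, hzD, hDm, hball2, mul_le_mul_of_nonneg_left hDm hεpos.le]
  set r := (1+ε)*(dF+dA)/η with hrdef
  have hrpos : 0 < r := div_pos (mul_pos (by linarith) hφpos) hη
  obtain ⟨y, hyF, hyd⟩ := (infDist_lt_iff hFxne).mp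
    (show dF < dF + ε*(dF+dA)/2 by nlinarith only [mul_pos hεpos hφpos])
  obtain ⟨a, haA, had⟩ := (infDist_lt_iff hAne).mp
    (show dA < dA + ε*(dF+dA)/2 by nlinarith only [mul_pos hεpos hφpos])
  have hrη : r * η = (1+ε)*(dF+dA) := by
    rw [hrdef, div_mul_cancel₀ _ hη.ne']
  have hsum : dist ybar y + dist x a < r * η := by
    rw [hrη]; nlinarith only [hyd, had]
  set η₁ := dist ybar y / r with hη₁def
  set η₂ := dist x a / r with hη₂def
  have hη₁ : 0 ≤ η₁ := div_nonneg dist_nonneg hrpos.le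
  have hη₂ : 0 ≤ η₂ := div_nonneg dist_nonneg hrpos.le
  have hη12 : η₁ + η₂ < η := by
    rw [hη₁def, hη₂def, ← add_div, div_lt_iff₀ hrpos]
    linarith [hsum]
  set u' := r⁻¹ • (x - z) with hu'def
  have hmem1 : u' ∈ {u : X | ∃ v ∈ closedBall (0 : Y) η₁,
      (u, v) ∈ contCone {p : X × Y | p.2 ∈ F p.1} (z, ybar)} := by
    refine ⟨r⁻¹ • (y - ybar), ?_, ?_⟩
    · rw [mem_closedBall_zero_iff, norm_smul, norm_inv, Real.norm_of_nonneg hrpos.le,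
        hη₁def, div_eq_inv_mul]
      gcongr
      rw [← dist_eq_norm, dist_comm]
    · apply subset_closure
      refine ⟨r, hrpos, ?_⟩
      have heq : r • ((u', r⁻¹ • (y - ybar)) : X × Y) = (x - z, y - ybar) := by
        rw [Prod.smul_mk, hu'def, smul_smul, mul_inv_cancel₀ hrpos.ne', one_smul,
          smul_smul, mul_inv_cancel₀ hrpos.ne', one_smul]
      rw [heq]
      show ((z + (x - z), ybar + (y - ybar)) : X × Y) ∈ _
      have h1 : z + (x - z) = x := by abel
      have h2 : ybar + (y - ybar) = y := by abel
      rw [h1, h2]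
      exact hyF
  have hmem2 : u' ∈ contCone A z + closedBall (0 : X) η₂ := by
    rw [Set.mem_add]
    refine ⟨r⁻¹ • (a - z), ?_, r⁻¹ • (x - a), ?_, ?_⟩
    · apply subset_closure
      refine ⟨r, hrpos, ?_⟩
      rw [smul_smul, mul_inv_cancel₀ hrpos.ne', one_smul]
      have h1 : z + (a - z) = a := by abel
      rw [h1]
      exact haA
    · rw [mem_closedBall_zero_iff, norm_smul, norm_inv, Real.norm_of_nonneg hrpos.le,
        hη₂def, div_eq_inv_mul]
      gcongr
      rw [← dist_eq_norm]
    · rw [← smul_add]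
      congr 1
      abel
  have hport := hincl z ⟨hzS, hzball⟩ η₁ η₂ hη₁ hη₂ hη12 ⟨hmem1, hmem2⟩
  rw [Set.mem_add] at hport
  obtain ⟨c, hc, b, hb, hcb⟩ := hport
  -- key inequality on the contingent cone of S at z
  have key : ∀ C ∈ contCone S z, ‖x - z‖ ≤ ‖x - z - C‖ + ε * ‖C‖ := by
    have hpre : ∀ C ∈ {v : X | ∃ t : ℝ, 0 < t ∧ z + t • v ∈ S},
        ‖x - z‖ ≤ ‖x - z - C‖ + ε * ‖C‖ := by
      rintro C ⟨t, ht, hw⟩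
      rcases le_or_gt 1 t with h1 | h1
      · have hmem : z + C ∈ S := by
          have hcomb := hScv hzS hw (a := 1 - 1/t) (b := 1/t)
            (by rw [sub_nonneg, div_le_one ht]; exact h1)
            (by positivity) (by ring)
          have heq : (1 - 1/t) • z + (1/t) • (z + t • C) = z + C := by
            rw [smul_add, smul_smul, one_div, inv_mul_cancel₀ (ne_of_gt ht), one_smul,
              sub_smul, one_smul]
            abel
          rwa [heq] at hcomb
        have := hEk (z + C) hmem
        rw [dist_eq_norm, dist_eq_norm, dist_eq_norm] at this
        have e1 : x - (z + C) = x - z - C := by abel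
        have e2 : z + C - z = C := by abel
        rw [e1, e2] at this
        exact this
      · have hEkw := hEk (z + t • C) hw
        rw [dist_eq_norm, dist_eq_norm, dist_eq_norm] at hEkw
        have e1 : x - (z + t • C) = x - z - t • C := by abel
        have e2 : z + t • C - z = t • C := by abel
        rw [e1, e2] at hEkw
        have hid : x - z - t • C = (1-t) • (x - z) + t • (x - z - C) := by
          module
        have hnorm : ‖x - z - t • C‖ ≤ (1-t)*‖x - z‖ + t*‖x - z - C‖ := by
          rw [hid]
          refine le_trans (norm_add_le _ _) ?_
          rw [norm_smul, norm_smul, Real.norm_of_nonneg (by linarith : (0:ℝ) ≤ 1 - t),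
            Real.norm_of_nonneg ht.le]
        have hnt : ‖t • C‖ = t * ‖C‖ := by
          rw [norm_smul, Real.norm_of_nonneg ht.le]
        rw [hnt] at hEkw
        have hfinal : t * ‖x - z‖ ≤ t * ‖x - z - C‖ + ε * (t * ‖C‖) := by
          nlinarith only [hEkw, hnorm]
        have h6 : t * ‖x - z‖ ≤ t * (‖x - z - C‖ + ε * ‖C‖) := by nlinarith only [hfinal]
        exact le_of_mul_le_mul_left h6 ht
    intro C hC
    have hclosed : IsClosed {C : X | ‖x - z‖ ≤ ‖x - z - C‖ + ε * ‖C‖} := by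
      have hcont : Continuous (fun C : X => ‖x - z - C‖ + ε * ‖C‖) := by fun_prop
      exact isClosed_le continuous_const hcont
    exact hclosed.closure_subset_iff.mpr hpre hC
  have hcC : r • c ∈ contCone S z := contCone_smul hrpos hc
  have hk2 := key _ hcC
  have hb' : ‖b‖ ≤ 1 := mem_closedBall_zero_iff.mp hb
  have hub : x - z - r • c = r • b := by
    have h1 : r • c + r • b = x - z := by
      rw [← smul_add, hcb, hu'def, smul_smul, mul_inv_cancel₀ hrpos.ne', one_smul]
    rw [← h1]; abel
  have hnormu : ‖x - z‖ = dist x z := (dist_eq_norm x z).symm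
  have hcnorm : ‖c‖ ≤ r⁻¹ * ‖x - z‖ + 1 := by
    have h1 : c = u' - b := by rw [← hcb]; abel
    rw [h1]
    refine le_trans (norm_sub_le _ _) ?_
    rw [hu'def, norm_smul, norm_inv, Real.norm_of_nonneg hrpos.le]
    linarith
  rw [hub] at hk2
  have hrb : ‖r • b‖ ≤ r := by
    rw [norm_smul, Real.norm_of_nonneg hrpos.le]
    nlinarith
  have hrc : ‖r • c‖ = r * ‖c‖ := by
    rw [norm_smul, Real.norm_of_nonneg hrpos.le]
  rw [hrc] at hk2
  -- combine everything
  have hN : D ≤ ‖x - z‖ := by rw [hnormu]; exact hDz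
  have hstep1 : ‖x - z‖ * (1 - ε) ≤ r * (1 + ε) := by
    have h3 : r * (r⁻¹ * ‖x - z‖ + 1) = ‖x - z‖ + r := by
      field_simp
    have h4 : r * ‖c‖ ≤ ‖x - z‖ + r := by
      rw [← h3]
      exact mul_le_mul_of_nonneg_left hcnorm hrpos.le
    have h5 : ε * (r * ‖c‖) ≤ ε * (‖x - z‖ + r) := mul_le_mul_of_nonneg_left h4 hεpos.le
    nlinarith only [hk2, hrb, h5]
  have hstep2 : r * (τ * η) < (1 + ε) * D := by
    have h1 : r * (τ * η) = (1+ε) * (τ * (dF + dA)) := by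
      rw [hrdef]; field_simp
    rw [h1]
    exact mul_lt_mul_of_pos_left hcon (by linarith)
  have hstep3 : D * (1 - ε) ≤ r * (1 + ε) := by
    have hεle : (0:ℝ) ≤ 1 - ε := by linarith
    nlinarith only [hstep1, mul_nonneg (sub_nonneg.mpr hN) hεle]
  have A1 : τ*η*(D*(1-ε)) ≤ τ*η*(r*(1+ε)) := mul_le_mul_of_nonneg_left hstep3 hτη.le
  have A2 : (1+ε)*(r*(τ*η)) < (1+ε)*((1+ε)*D) :=
    mul_lt_mul_of_pos_left hstep2 (by linarith)
  have A3 : D*((1+ε)^2) ≤ D*(τ*η*(1-ε)) := mul_le_mul_of_nonneg_left hiii hDpos.le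
  nlinarith only [A1, A2, A3]
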